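/- Let (A, θ) be a monounary algebra in which every anti-path is finite (there is no infinite sequence x₁, x₂, … of distinct elements with θ(x_{i+1}) = x_i). Then A is generated by the union of its set of leaves (elements not in the image of θ) together with the set of cyclic elements; i.e., every element of A equals θ^n(g) for some n ≥ 0 and some g that is either a leaf or cyclic. -/
import Mathlib

theorem stmt_9 {A : Type*} (θ : A → A)
    (hap : ¬ ∃ g : ℕ → A, Function.Injective g ∧ ∀ i : ℕ, θ (g (i + 1)) = g i) :
    ∀ a : A, ∃ (n : ℕ) (g : A), θ^[n] g = a ∧
      ((∀ b : A, θ b ≠ g) ∨ ∃ k ≥ 1, θ^[k] g = g) := by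
  classical
  set S : Set A := {x | ∃ n g, θ^[n] g = x ∧ ((∀ b : A, θ b ≠ g) ∨ ∃ k ≥ 1, θ^[k] g = g)} with hS
  intro a
  by_contra ha
  have ha' : a ∉ S := ha
  have key : ∀ x : A, x ∉ S → ∃ y, y ∉ S ∧ θ y = x := by
    intro x hx
    by_cases hleaf : ∀ b : A, θ b ≠ x
    · exact absurd ⟨0, x, rfl, Or.inl hleaf⟩ hx
    · push_neg at hleaf
      obtain ⟨y, hy⟩ := hleaf
      refine ⟨y, ?_, hy⟩
      rintro ⟨n, g, hg, hgp⟩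
      exact hx ⟨n + 1, g, by rw [Function.iterate_succ_apply', hg, hy], hgp⟩
  let f : {x : A // x ∉ S} → {x : A // x ∉ S} :=
    fun x => ⟨(key x.1 x.2).choose, (key x.1 x.2).choose_spec.1⟩
  have hf : ∀ x : {x : A // x ∉ S}, θ (f x).1 = x.1 :=
    fun x => (key x.1 x.2).choose_spec.2
  let g : ℕ → A := fun i => (f^[i] ⟨a, ha'⟩).1
  have hgnS : ∀ i, g i ∉ S := fun i => (f^[i] ⟨a, ha'⟩).2
  have hstep : ∀ i, θ (g (i + 1)) = g i := by
    intro i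
    show θ (f^[i+1] ⟨a, ha'⟩).1 = _
    rw [Function.iterate_succ_apply']
    exact hf _
  have hiter : ∀ i m, θ^[m] (g (i + m)) = g i := by
    intro i m
    induction m with
    | zero => rfl
    | succ m ih =>
        rw [Function.iterate_succ_apply, show i + (m + 1) = (i + m) + 1 by omega,
          hstep (i + m)]
        exact ih
  have hinj : Function.Injective g := by
    intro i j hij
    by_contra hne
    wlog h : i < j generalizing i j
    · exact this hij.symm (Ne.symm hne) (by omega)
    · have hk : j - i ≥ 1 := by omega
      have hc : θ^[j - i] (g j) = g j := by
        have h2 := hiter i (j - i)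
        rw [Nat.add_sub_cancel' h.le] at h2
        rw [h2, hij]
      exact hgnS j ⟨0, g j, rfl, Or.inr ⟨j - i, hk, hc⟩⟩
  exact hap ⟨g, hinj, hstep⟩
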